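/- In ℤ[x] the identity D_{{0,1,3,4}}(x) = x·(x−1)⁴·(x² + 4x + 1) holds. Consequently, for any field K of characteristic zero, the roots of D_{{0,1,3,4}} in K ∖ {0,1} are exactly the elements β ∈ K with β² + 4β + 1 = 0. -/

import Mathlib

open Polynomial

universe u

/-- The 4×4 matrix `𝐌_J(x)` for `J = {a,b,c,d}` (columns in the given order),
whose column for exponent `i` is `(1, i, x^i, i·x^i)ᵀ`, and its determinant `D_J`. -/
noncomputable def Dfour (a b c d : ℕ) : Polynomial ℤ :=
  (Matrix.of fun r (j : Fin 4) =>
    ![(1 : Polynomial ℤ), ((![a,b,c,d] j : ℕ) : Polynomial ℤ),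
      X ^ (![a,b,c,d] j), ((![a,b,c,d] j : ℕ) : Polynomial ℤ) * X ^ (![a,b,c,d] j)] r).det

/-- `D_{{0,1,3,4}}(x) = x (x-1)⁴ (x² + 4x + 1)` in `ℤ[x]`, and consequently
for a field `K` of characteristic zero, the roots of `D_{{0,1,3,4}}` in `K ∖ {0,1}` are
exactly the elements `β` with `β² + 4β + 1 = 0`. -/
theorem Dfour_0134_factorization :
    Dfour 0 1 3 4 = X * (X - 1) ^ 4 * (X ^ 2 + 4 * X + 1) ∧
    ∀ (K : Type u) [Field K] [CharZero K] (β : K), β ≠ 0 → β ≠ 1 →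
      (Polynomial.aeval β (Dfour 0 1 3 4) = 0 ↔ β ^ 2 + 4 * β + 1 = 0) := by
  have hfac : Dfour 0 1 3 4 = X * (X - 1) ^ 4 * (X ^ 2 + 4 * X + 1) := by
    unfold Dfour
    simp [Matrix.det_succ_row_zero, Fin.sum_univ_succ, Matrix.of_apply, Fin.succAbove, Fin.castSucc, Fin.castAdd, Fin.castLE]
    ring
  refine ⟨hfac, ?_⟩
  intro K _ _ β hβ0 hβ1
  rw [hfac]
  simp only [map_mul, map_add, map_pow, map_sub, map_one, map_ofNat, aeval_X]
  constructor
  · intro h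
    rcases mul_eq_zero.mp h with h | h
    · rcases mul_eq_zero.mp h with h | h
      · exact absurd h hβ0
      · exact absurd (sub_eq_zero.mp (pow_eq_zero_iff (by norm_num) |>.mp h)) hβ1
    · linear_combination h
  · intro h
    rw [show β ^ 2 + (4:K) * β + 1 = 0 from by linear_combination h]
    ring
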